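/- Eventwise prefix property of optimal supports (Corollary): let U be admissible with derivative U', and let (c, g) be a feasible portfolio with c > 0 that maximizes Φ(c', g') = ∑_x Pr'(x)·U(W'(x)) over all feasible portfolios. Then for every event ℓ and outcomes i, j of event ℓ, if g ℓ i > 0 and g ℓ j = 0 then p ℓ i / π ℓ i > p ℓ j / π ℓ j; consequently, when the outcomes of each event are sorted by decreasing edge ratio p ℓ i / π ℓ i, the active set {i : g ℓ i > 0} of each event is a prefix. -/

import Mathlib

open Finset

/-- Probability of a product state `x`. -/
def prodProb {m : ℕ} {n : Fin m → ℕ} (p : ∀ ℓ, Fin (n ℓ) → ℝ)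
    (x : ∀ ℓ, Fin (n ℓ)) : ℝ :=
  ∏ ℓ, p ℓ (x ℓ)

/-- Terminal wealth of the portfolio `(c, g)` in product state `x`. -/
def wealth {m : ℕ} {n : Fin m → ℕ} (c : ℝ) (g : ∀ ℓ, Fin (n ℓ) → ℝ)
    (x : ∀ ℓ, Fin (n ℓ)) : ℝ :=
  c + ∑ ℓ, g ℓ (x ℓ)

/-- Probability of a reduced state `y` (a state of all events other than `ℓ`). -/
def redProb {m : ℕ} {n : Fin m → ℕ} (p : ∀ ℓ, Fin (n ℓ) → ℝ) (ℓ : Fin m)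
    (y : ∀ r : {r : Fin m // r ≠ ℓ}, Fin (n r.1)) : ℝ :=
  ∏ r, p r.1 (y r)

/-- Background wealth `R_ℓ(y)` from all events other than `ℓ`. -/
def background {m : ℕ} {n : Fin m → ℕ} (c : ℝ) (g : ∀ ℓ, Fin (n ℓ) → ℝ) (ℓ : Fin m)
    (y : ∀ r : {r : Fin m // r ≠ ℓ}, Fin (n r.1)) : ℝ :=
  c + ∑ r, g r.1 (y r)

/-- Reduced expectation `E₋ℓ[h]` over reduced states of event `ℓ`. -/
def Eminus {m : ℕ} {n : Fin m → ℕ} (p : ∀ ℓ, Fin (n ℓ) → ℝ) (ℓ : Fin m)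
    (h : (∀ r : {r : Fin m // r ≠ ℓ}, Fin (n r.1)) → ℝ) : ℝ :=
  ∑ y, redProb p ℓ y * h y

/-- Feasibility: nonnegative cash and wagers, unit budget, positive wealth in every state. -/
def Feasible {m : ℕ} {n : Fin m → ℕ} (π : ∀ ℓ, Fin (n ℓ) → ℝ)
    (c : ℝ) (g : ∀ ℓ, Fin (n ℓ) → ℝ) : Prop :=
  0 ≤ c ∧ (∀ ℓ i, 0 ≤ g ℓ i) ∧ (c + ∑ ℓ, ∑ i, π ℓ i * g ℓ i = 1) ∧
    ∀ x, 0 < wealth c g x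

/-- The wagers `g` are supported on the support family `A`. -/
def SupportedOn {m : ℕ} {n : Fin m → ℕ} (A : ∀ ℓ, Finset (Fin (n ℓ)))
    (g : ∀ ℓ, Fin (n ℓ) → ℝ) : Prop :=
  ∀ ℓ i, (i ∈ A ℓ → 0 < g ℓ i) ∧ (i ∉ A ℓ → g ℓ i = 0)

/-- `U` is an admissible utility with derivative `U'`. -/
def Admissible (U U' : ℝ → ℝ) : Prop :=
  (∀ w : ℝ, 0 < w → HasDerivAt U (U' w) w) ∧ (∀ w : ℝ, 0 < w → 0 < U' w) ∧
    StrictAntiOn U' (Set.Ioi 0)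


lemma splitAt_prod {m : ℕ} {n : Fin m → ℕ} (ℓ : Fin m) (f : ∀ r, Fin (n r) → ℝ)
    (k : Fin (n ℓ)) (y : ∀ r : {r : Fin m // r ≠ ℓ}, Fin (n r.1)) :
    ∏ r, f r (((Equiv.piSplitAt ℓ (fun r => Fin (n r))).symm (k, y)) r)
      = f ℓ k * ∏ r : {r : Fin m // r ≠ ℓ}, f r.1 (y r) := by
  set e := Equiv.piSplitAt ℓ (fun r => Fin (n r)) with he
  set x := e.symm (k, y) with hx
  have h1 : e x = (k, y) := e.apply_symm_apply _
  have hxl : x ℓ = k := congrArg Prod.fst h1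
  have hxr : ∀ r : {r : Fin m // r ≠ ℓ}, x r.1 = y r :=
    fun r => congrFun (congrArg Prod.snd h1) r
  rw [← Finset.mul_prod_erase Finset.univ _ (Finset.mem_univ ℓ), hxl]
  congr 1
  rw [Finset.prod_subtype (p := fun r => r ≠ ℓ) (Finset.univ.erase ℓ) (fun r => by simp) (fun r => f r (x r))]
  exact Finset.prod_congr rfl fun r _ => by rw [hxr r]

lemma splitAt_sum {m : ℕ} {n : Fin m → ℕ} (ℓ : Fin m) (f : ∀ r, Fin (n r) → ℝ)
    (k : Fin (n ℓ)) (y : ∀ r : {r : Fin m // r ≠ ℓ}, Fin (n r.1)) :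
    ∑ r, f r (((Equiv.piSplitAt ℓ (fun r => Fin (n r))).symm (k, y)) r)
      = f ℓ k + ∑ r : {r : Fin m // r ≠ ℓ}, f r.1 (y r) := by
  set e := Equiv.piSplitAt ℓ (fun r => Fin (n r)) with he
  set x := e.symm (k, y) with hx
  have h1 : e x = (k, y) := e.apply_symm_apply _
  have hxl : x ℓ = k := congrArg Prod.fst h1
  have hxr : ∀ r : {r : Fin m // r ≠ ℓ}, x r.1 = y r :=
    fun r => congrFun (congrArg Prod.snd h1) r
  rw [← Finset.add_sum_erase Finset.univ _ (Finset.mem_univ ℓ), hxl]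
  congr 1
  rw [Finset.sum_subtype (p := fun r => r ≠ ℓ) (Finset.univ.erase ℓ) (fun r => by simp) (fun r => f r (x r))]
  exact Finset.sum_congr rfl fun r _ => by rw [hxr r]
/-- eventwise prefix property of optimal supports: at a maximizer with
positive cash, an active outcome has a strictly larger edge ratio than any inactive
outcome of the same event; hence, sorted by decreasing edge ratio, the active set of
each event is a prefix. -/
theorem active_prefix_property {m : ℕ} (n : Fin m → ℕ)
    (p π : ∀ ℓ, Fin (n ℓ) → ℝ) (hm : 1 ≤ m)
    (hp : ∀ ℓ i, 0 < p ℓ i) (hpsum : ∀ ℓ, ∑ i, p ℓ i = 1)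
    (hπ : ∀ ℓ i, 0 < π ℓ i)
    (U U' : ℝ → ℝ) (hU : Admissible U U')
    (c : ℝ) (g : ∀ ℓ, Fin (n ℓ) → ℝ)
    (hfeas : Feasible π c g) (hc : 0 < c)
    (hopt : ∀ c' : ℝ, ∀ g' : ∀ ℓ, Fin (n ℓ) → ℝ, Feasible π c' g' →
      ∑ x, prodProb p x * U (wealth c' g' x) ≤ ∑ x, prodProb p x * U (wealth c g x)) :
    (∀ ℓ : Fin m, ∀ i j : Fin (n ℓ), 0 < g ℓ i → g ℓ j = 0 →
      p ℓ j / π ℓ j < p ℓ i / π ℓ i)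
    ∧ (∀ ℓ : Fin m,
        (∀ i j : Fin (n ℓ), i ≤ j → p ℓ j / π ℓ j ≤ p ℓ i / π ℓ i) →
        ∀ i j : Fin (n ℓ), i ≤ j → 0 < g ℓ j → 0 < g ℓ i) := by
  obtain ⟨hc0, hg0, hbudget, hWpos⟩ := hfeas
  have hn : ∀ r, 0 < n r := by
    intro r
    rcases Nat.eq_zero_or_pos (n r) with h | h
    · exfalso
      have h1 := hpsum r
      haveI : IsEmpty (Fin (n r)) := by rw [h]; infer_instance
      rw [Finset.univ_eq_empty] at h1
      simp at h1
    · exact h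
  haveI hne : Nonempty (∀ r, Fin (n r)) := ⟨fun r => ⟨0, hn r⟩⟩
  have key : ∀ ℓ : Fin m, ∀ i j : Fin (n ℓ), 0 < g ℓ i → g ℓ j = 0 →
      p ℓ j / π ℓ j < p ℓ i / π ℓ i := by
    intro ℓ i j hgi hgj
    by_contra hcon
    push_neg at hcon
    have hij : i ≠ j := fun h => by rw [h, hgj] at hgi; exact lt_irrefl 0 hgi
    have hple : p ℓ i * π ℓ j ≤ p ℓ j * π ℓ i := by
      rw [div_le_div_iff₀ (hπ ℓ i) (hπ ℓ j)] at hcon; linarith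
    haveI hney : Nonempty (∀ r : {r : Fin m // r ≠ ℓ}, Fin (n r.1)) := ⟨fun r => ⟨0, hn r.1⟩⟩
    -- the perturbation direction
    set v : Fin (n ℓ) → ℝ :=
      fun k => (if k = i then -(π ℓ j) else 0) + (if k = j then π ℓ i else 0) with hv
    have hvi : v i = -(π ℓ j) := by simp [hv, hij]
    have hvj : v j = π ℓ i := by simp [hv, hij.symm]
    have hvge : ∀ k, -(π ℓ j) ≤ v k := by
      intro k; have h1 := hπ ℓ i; have h2 := hπ ℓ j
      simp only [hv]; split_ifs <;> linarith
    have hvsum : ∑ k, π ℓ k * v k = 0 := by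
      simp only [hv, mul_add, mul_ite, mul_zero, mul_neg, Finset.sum_add_distrib,
        Finset.sum_ite_eq', Finset.mem_univ, if_true]
      ring
    set g' : ℝ → ∀ r, Fin (n r) → ℝ :=
      fun t => Function.update g ℓ (fun k => g ℓ k + t * v k) with hg'
    -- wealth identity
    have hwid : ∀ t (x : ∀ r, Fin (n r)), wealth c (g' t) x = wealth c g x + t * v (x ℓ) := by
      intro t x
      unfold wealth
      rw [← Finset.add_sum_erase Finset.univ (fun r => (g' t) r (x r)) (Finset.mem_univ ℓ),
        ← Finset.add_sum_erase Finset.univ (fun r => g r (x r)) (Finset.mem_univ ℓ)]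
      have h1 : (g' t) ℓ (x ℓ) = g ℓ (x ℓ) + t * v (x ℓ) := by
        simp [hg', Function.update_self]
      have h2 : ∑ r ∈ Finset.univ.erase ℓ, (g' t) r (x r)
          = ∑ r ∈ Finset.univ.erase ℓ, g r (x r) := by
        apply Finset.sum_congr rfl
        intro r hr
        simp only [hg']
        rw [Function.update_of_ne (Finset.mem_erase.mp hr).1]
      rw [h1, h2]; ring
    -- minimal wealth
    set Wmin : ℝ := Finset.univ.inf' Finset.univ_nonempty (wealth c g) with hWmin
    have hWminpos : 0 < Wmin := by
      rw [hWmin, Finset.lt_inf'_iff]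
      exact fun x _ => hWpos x
    set ε : ℝ := min (g ℓ i / π ℓ j) (Wmin / π ℓ j) with hε
    have hεpos : 0 < ε := lt_min (div_pos hgi (hπ ℓ j)) (div_pos hWminpos (hπ ℓ j))
    -- feasibility of the perturbed portfolio
    have hfeast : ∀ t ∈ Set.Ico (0:ℝ) ε, Feasible π c (g' t) := by
      intro t ht
      have htπ : t * π ℓ j < Wmin := by
        have h1 : t < Wmin / π ℓ j := lt_of_lt_of_le ht.2 (min_le_right _ _)
        have := (lt_div_iff₀ (hπ ℓ j)).mp h1
        linarith
      have htgi : t * π ℓ j ≤ g ℓ i := by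
        have h1 : t ≤ g ℓ i / π ℓ j := le_of_lt (lt_of_lt_of_le ht.2 (min_le_left _ _))
        have := mul_le_mul_of_nonneg_right h1 (le_of_lt (hπ ℓ j))
        rwa [div_mul_cancel₀ _ (ne_of_gt (hπ ℓ j))] at this
      refine ⟨hc0, ?_, ?_, ?_⟩
      · intro r k
        by_cases hr : r = ℓ
        · subst hr
          simp only [hg', Function.update_self]
          by_cases hk : k = i
          · subst hk; rw [hvi]; have := hg0 r k; linarith [htgi]
          · have hvk : 0 ≤ v k := by
              simp only [hv, if_neg hk]; split_ifs <;> simp [le_of_lt (hπ r i)]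
            exact add_nonneg (hg0 r k) (mul_nonneg ht.1 hvk)
        · simp only [hg']; rw [Function.update_of_ne hr]; exact hg0 r k
      · have : ∑ r, ∑ k, π r k * (g' t) r k = ∑ r, ∑ k, π r k * g r k := by
          apply Finset.sum_congr rfl
          intro r _
          by_cases hr : r = ℓ
          · subst hr
            simp only [hg', Function.update_self]
            have : ∑ k, π r k * (g r k + t * v k)
                = ∑ k, π r k * g r k + t * ∑ k, π r k * v k := by
              rw [Finset.mul_sum, ← Finset.sum_add_distrib]
              exact Finset.sum_congr rfl fun k _ => by ring
            rw [this, hvsum, mul_zero, add_zero]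
          · simp only [hg']; rw [Function.update_of_ne hr]
        rw [this]; exact hbudget
      · intro x
        rw [hwid t x]
        have h1 : Wmin ≤ wealth c g x := Finset.inf'_le _ (Finset.mem_univ x)
        have h2 : t * (-(π ℓ j)) ≤ t * v (x ℓ) :=
          mul_le_mul_of_nonneg_left (hvge (x ℓ)) ht.1
        nlinarith
    -- the objective along the perturbation
    set φ : ℝ → ℝ := fun t => ∑ x, prodProb p x * U (wealth c g x + t * v (x ℓ)) with hφ
    have hφle : ∀ t ∈ Set.Ico (0:ℝ) ε, φ t ≤ φ 0 := by
      intro t ht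
      have h1 := hopt c (g' t) (hfeast t ht)
      have h2 : ∑ x, prodProb p x * U (wealth c (g' t) x) = φ t :=
        Finset.sum_congr rfl fun x _ => by rw [hwid t x]
      have h3 : ∑ x, prodProb p x * U (wealth c g x) = φ 0 := by
        simp [hφ]
      rw [h2, h3] at h1; exact h1
    -- derivative of φ at 0
    set d : ℝ := ∑ x, prodProb p x * (U' (wealth c g x) * v (x ℓ)) with hd
    have hderiv : HasDerivAt φ d 0 := by
      rw [hφ, hd]
      apply HasDerivAt.fun_sum
      intro x _
      have hW := hWpos x
      have h1 : HasDerivAt (fun t : ℝ => wealth c g x + t * v (x ℓ)) (v (x ℓ)) 0 := by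
        simpa using ((hasDerivAt_id (0:ℝ)).mul_const (v (x ℓ))).const_add (wealth c g x)
      have h0 : HasDerivAt U (U' (wealth c g x))
          ((fun t : ℝ => wealth c g x + t * v (x ℓ)) 0) := by
        simpa using hU.1 (wealth c g x) hW
      have h2 := (h0.comp 0 h1).const_mul (prodProb p x)
      simpa [Function.comp] using h2
    -- d > 0
    set e := Equiv.piSplitAt ℓ (fun r => Fin (n r)) with hee
    set B : (∀ r : {r : Fin m // r ≠ ℓ}, Fin (n r.1)) → ℝ := background c g ℓ with hB
    have hwS : ∀ (k : Fin (n ℓ)) y, wealth c g (e.symm (k, y)) = B y + g ℓ k := by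
      intro k y
      unfold wealth
      rw [splitAt_sum ℓ g k y]
      simp only [hB]; unfold background; ring
    have hcompl : ∀ (k : Fin (n ℓ)) y, (e.symm (k, y)) ℓ = k :=
      fun k y => congrArg Prod.fst (e.apply_symm_apply (k, y))
    have hprodS : ∀ (k : Fin (n ℓ)) y,
        prodProb p (e.symm (k, y)) = p ℓ k * redProb p ℓ y := by
      intro k y
      unfold prodProb redProb
      exact splitAt_prod ℓ p k y
    have hBpos : ∀ y, 0 < B y := by
      intro y
      have h := hWpos (e.symm (j, y))
      rw [hwS j y, hgj, add_zero] at h; exact h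
    have hBipos : ∀ y, 0 < B y + g ℓ i := by
      intro y
      have h := hWpos (e.symm (i, y))
      rw [hwS i y] at h; exact h
    have hredpos : ∀ y, 0 < redProb p ℓ y :=
      fun y => Finset.prod_pos fun r _ => hp r.1 _
    set S : Fin (n ℓ) → ℝ :=
      fun k => ∑ y, (p ℓ k * redProb p ℓ y) * (U' (B y + g ℓ k) * v k) with hS
    have hdS : d = ∑ k, S k := by
      rw [hd, ← Equiv.sum_comp e.symm
        (fun x => prodProb p x * (U' (wealth c g x) * v (x ℓ))), Fintype.sum_prod_type]
      apply Finset.sum_congr rfl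
      intro k _
      apply Finset.sum_congr rfl
      intro y _
      rw [hprodS k y, hwS k y, hcompl k y]
    have hSzero : ∀ k ∈ (Finset.univ : Finset (Fin (n ℓ))), k ∉ ({i, j} : Finset (Fin (n ℓ))) →
        S k = 0 := by
      intro k _ hk
      simp only [Finset.mem_insert, Finset.mem_singleton, not_or] at hk
      have : v k = 0 := by simp [hv, hk.1, hk.2]
      simp [hS, this]
    have hdpos : 0 < d := by
      rw [hdS, ← Finset.sum_subset (Finset.subset_univ ({i, j} : Finset (Fin (n ℓ)))) hSzero,
        Finset.sum_pair hij, hS]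
      simp only
      rw [← Finset.sum_add_distrib]
      apply Finset.sum_pos _ Finset.univ_nonempty
      intro y _
      have hU1 : 0 < U' (B y + g ℓ i) := hU.2.1 _ (hBipos y)
      have hU2 : 0 < U' (B y) := hU.2.1 _ (hBpos y)
      have hU3 : U' (B y + g ℓ i) < U' (B y) :=
        hU.2.2 (hBpos y) (hBipos y) (by linarith)
      have hlt : p ℓ i * π ℓ j * U' (B y + g ℓ i) < p ℓ j * π ℓ i * U' (B y) := by
        have ha : p ℓ i * π ℓ j * U' (B y + g ℓ i) ≤ p ℓ j * π ℓ i * U' (B y + g ℓ i) :=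
          mul_le_mul_of_nonneg_right hple (le_of_lt hU1)
        have hb : p ℓ j * π ℓ i * U' (B y + g ℓ i) < p ℓ j * π ℓ i * U' (B y) :=
          mul_lt_mul_of_pos_left hU3 (mul_pos (hp ℓ j) (hπ ℓ i))
        linarith
      have hfact := mul_pos (hredpos y) (sub_pos.mpr hlt)
      rw [hvi, hvj, hgj, add_zero]
      nlinarith [hfact]
    -- contradiction : d > 0 but φ t ≤ φ 0 for t ∈ [0, ε)
    have htend : Filter.Tendsto (slope φ 0) (nhdsWithin 0 (Set.Ioi 0)) (nhds d) :=
      (hasDerivAt_iff_tendsto_slope.mp hderiv).mono_left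
        (nhdsWithin_mono _ (fun t ht => ne_of_gt ht))
    have hev : ∀ᶠ t in nhdsWithin (0:ℝ) (Set.Ioi 0), slope φ 0 t ≤ 0 := by
      filter_upwards [Ioo_mem_nhdsGT_of_mem (Set.left_mem_Ico.mpr hεpos)] with t ht
      rw [slope_def_field, sub_zero]
      have h1 : φ t ≤ φ 0 := hφle t ⟨le_of_lt ht.1, ht.2⟩
      apply div_nonpos_of_nonpos_of_nonneg (by linarith) (le_of_lt ht.1)
    have : d ≤ 0 := le_of_tendsto htend hev
    linarith
  refine ⟨key, ?_⟩
  intro ℓ hsort i j hij hgj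
  by_contra hgi
  have hgi0 : g ℓ i = 0 := le_antisymm (not_lt.mp hgi) (hg0 ℓ i)
  have h1 := key ℓ j i hgj hgi0
  have h2 := hsort i j hij
  linarith
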